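/- Let A ∈ ℝ^{n×n} be symmetric with eigendecomposition A = VΛV^T, where the eigenvalues are ordered by descending magnitude |λ_1| ≥ |λ_2| ≥ … ≥ |λ_n| and the columns v_i of V are orthonormal eigenvectors. Then for every k, the matrix A_k = Σ_{i=1}^{k} λ_i v_i v_i^T satisfies ‖A − A_k‖_F ≤ ‖A − B‖_F for every matrix B ∈ ℝ^{n×n} of rank at most k, i.e., the optimal low-rank approximation property also holds in the Frobenius norm. -/

import Mathlib

open scoped Matrix

attribute [local instance] Matrix.frobeniusNormedAddCommGroup

private lemma frob_le' {n m : ℕ} (X Y : Matrix (Fin n) (Fin m) ℝ)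
    (h : ∑ a, ∑ b, X a b ^ 2 ≤ ∑ a, ∑ b, Y a b ^ 2) : ‖X‖ ≤ ‖Y‖ := by
  rw [Matrix.frobenius_norm_def, Matrix.frobenius_norm_def]
  have h2 : ∀ x : ℝ, ‖x‖ ^ (2:ℝ) = x ^ 2 := fun x => by
    rw [show (2:ℝ) = ((2:ℕ):ℝ) by norm_num, Real.rpow_natCast, Real.norm_eq_abs, sq_abs]
  apply Real.rpow_le_rpow (by positivity) ?_ (by norm_num)
  simp_rw [h2]; exact h

private lemma key_sum {n : ℕ} (v : Fin n → Fin n → ℝ)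
    (horth : ∀ i j, v i ⬝ᵥ v j = if i = j then (1:ℝ) else 0) (d : Fin n → ℝ) :
    ∑ a, (∑ i, d i * v i a) ^ 2 = ∑ i, d i ^ 2 := by
  simp_rw [sq, Finset.sum_mul_sum]
  rw [Finset.sum_comm]
  refine Finset.sum_congr rfl fun i _ => ?_
  rw [Finset.sum_comm]
  have h1 : ∀ i', ∑ a, (d i * v i a) * (d i' * v i' a) = (d i * d i') * (v i ⬝ᵥ v i') := by
    intro i'; rw [dotProduct, Finset.mul_sum]
    exact Finset.sum_congr rfl fun a _ => by ring
  rw [Finset.sum_congr rfl fun i' _ => h1 i']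
  simp_rw [horth]
  simp [Finset.sum_ite_eq]

private lemma majorize {n k : ℕ} (e p : Fin n → ℝ) (he : ∀ i j : Fin n, i ≤ j → e j ≤ e i)
    (he0 : ∀ i, 0 ≤ e i) (hp0 : ∀ i, 0 ≤ p i) (hp1 : ∀ i, p i ≤ 1)
    (hsum : (n:ℝ) - k ≤ ∑ i, p i) :
    ∑ i ∈ Finset.univ.filter (fun i : Fin n => ¬ (i : ℕ) < k), e i ≤ ∑ i, e i * p i := by
  by_cases hk : n ≤ k
  · have hT : Finset.univ.filter (fun i : Fin n => ¬ (i : ℕ) < k) = ∅ := by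
      apply Finset.filter_false_of_mem
      intro i _
      simp only [not_not]
      exact lt_of_lt_of_le i.isLt hk
    rw [hT, Finset.sum_empty]
    exact Finset.sum_nonneg fun i _ => mul_nonneg (he0 i) (hp0 i)
  push_neg at hk
  set κ : Fin n := ⟨k, hk⟩ with hκ
  set T := Finset.univ.filter (fun i : Fin n => ¬ (i : ℕ) < k) with hT
  set Sk := Finset.univ.filter (fun i : Fin n => (i : ℕ) < k) with hSk
  have hsplit : ∑ i, e i * p i = ∑ i ∈ Sk, e i * p i + ∑ i ∈ T, e i * p i :=
    (Finset.sum_filter_add_sum_filter_not _ _ _).symm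
  have hcardT : (T.card : ℝ) = (n : ℝ) - k := by
    have h1 : Sk.card + T.card = n := by
      rw [hSk, hT]
      simpa using Finset.card_filter_add_card_filter_not
        (s := (Finset.univ : Finset (Fin n))) (p := fun i : Fin n => (i : ℕ) < k)
    have h2 : Sk.card = k := by
      have : Sk = Finset.map ⟨fun i : Fin k => ⟨(i : ℕ), lt_trans i.isLt hk⟩, by
          intro a b hab
          simpa [Fin.ext_iff] using hab⟩ Finset.univ := by
        ext x
        simp only [Finset.mem_map, Finset.mem_univ, Function.Embedding.coeFn_mk, hSk,
          Finset.mem_filter, true_and]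
        constructor
        · rintro hx
          exact ⟨⟨(x : ℕ), hx⟩, rfl⟩
        · rintro ⟨i, _, rfl⟩
          exact i.isLt
      rw [this, Finset.card_map, Finset.card_univ, Fintype.card_fin]
    have : T.card = n - k := by omega
    rw [this]
    push_cast [Nat.cast_sub hk.le]
    ring
  have hTle : ∑ i ∈ T, e i * (1 - p i) ≤ e κ * ((n:ℝ) - k - ∑ i ∈ T, p i) := by
    have : ∀ i ∈ T, e i * (1 - p i) ≤ e κ * (1 - p i) := by
      intro i hi
      have hki : κ ≤ i := by
        rw [hT, Finset.mem_filter] at hi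
        have := hi.2
        have hκv : (κ:ℕ) = k := rfl
        exact Fin.le_def.mpr (by omega)
      exact mul_le_mul_of_nonneg_right (he κ i hki) (by linarith [hp1 i])
    calc ∑ i ∈ T, e i * (1 - p i) ≤ ∑ i ∈ T, e κ * (1 - p i) := Finset.sum_le_sum this
      _ = e κ * ((T.card : ℝ) - ∑ i ∈ T, p i) := by
          rw [← Finset.mul_sum, Finset.sum_sub_distrib]
          simp [mul_comm]
      _ = e κ * ((n:ℝ) - k - ∑ i ∈ T, p i) := by rw [hcardT]
  have hSle : e κ * (∑ i ∈ Sk, p i) ≤ ∑ i ∈ Sk, e i * p i := by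
    rw [Finset.mul_sum]
    apply Finset.sum_le_sum
    intro i hi
    have hik : i ≤ κ := by
      rw [hSk, Finset.mem_filter] at hi
      have hκv : (κ:ℕ) = k := rfl
      have := hi.2
      exact Fin.le_def.mpr (by omega)
    exact mul_le_mul_of_nonneg_right (he i κ hik) (hp0 i)
  have hpsplit : ∑ i ∈ Sk, p i + ∑ i ∈ T, p i = ∑ i, p i :=
    Finset.sum_filter_add_sum_filter_not _ _ _
  have h0 : e κ * ((n:ℝ) - k - ∑ i ∈ T, p i) ≤ e κ * (∑ i ∈ Sk, p i) := by
    apply mul_le_mul_of_nonneg_left _ (he0 κ)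
    linarith
  have hfinal : ∑ i ∈ T, e i * (1 - p i) ≤ ∑ i ∈ Sk, e i * p i := by linarith
  have : ∑ i ∈ T, e i = ∑ i ∈ T, e i * p i + ∑ i ∈ T, e i * (1 - p i) := by
    rw [← Finset.sum_add_distrib]
    exact Finset.sum_congr rfl fun i _ => by ring
  linarith

theorem stmt_11 {n : ℕ} (A : Matrix (Fin n) (Fin n) ℝ) (hA : A.IsSymm)
    (v : Fin n → Fin n → ℝ) (EV : Fin n → ℝ)
    (horth : ∀ i j, v i ⬝ᵥ v j = if i = j then (1 : ℝ) else 0)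
    (heig : ∀ i, A *ᵥ v i = EV i • v i)
    (horder : ∀ i j : Fin n, i ≤ j → |EV j| ≤ |EV i|) (k : ℕ) :
    ∀ B : Matrix (Fin n) (Fin n) ℝ, B.rank ≤ k →
      ‖A - ∑ i ∈ Finset.univ.filter (fun i : Fin n => (i : ℕ) < k),
          EV i • Matrix.vecMulVec (v i) (v i)‖ ≤ ‖A - B‖ := by
  intro B hB
  rcases Nat.eq_zero_or_pos n with hn | hn
  · subst hn
    have : (A - ∑ i ∈ Finset.univ.filter (fun i : Fin 0 => (i : ℕ) < k),
        EV i • Matrix.vecMulVec (v i) (v i)) = A - B := by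
      ext a b; exact a.elim0
    rw [this]
  haveI : Nonempty (Fin n) := ⟨⟨0, hn⟩⟩
  -- Euclidean space setup
  let v' : Fin n → EuclideanSpace ℝ (Fin n) := fun i => WithLp.toLp 2 (v i)
  have hv' : Orthonormal ℝ v' := by
    rw [orthonormal_iff_ite]
    intro i j
    simpa [v', PiLp.inner_apply, PiLp.toLp_apply, RCLike.inner_apply, starRingEnd_apply,
      dotProduct, mul_comm] using horth i j
  let bas : Module.Basis (Fin n) ℝ (EuclideanSpace ℝ (Fin n)) :=
    basisOfOrthonormalOfCardEqFinrank hv' (by simp)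
  let obas : OrthonormalBasis (Fin n) ℝ (EuclideanSpace ℝ (Fin n)) :=
    bas.toOrthonormalBasis (by rwa [coe_basisOfOrthonormalOfCardEqFinrank])
  have hobas : ∀ i, obas i = v' i := by
    intro i; simp [obas, bas, Module.Basis.coe_toOrthonormalBasis]
  have hexp : ∀ x : EuclideanSpace ℝ (Fin n), x = ∑ i, (inner ℝ (v' i) x : ℝ) • v' i := by
    intro x
    have := obas.sum_repr' x
    simpa [hobas] using this.symm
  have hpars : ∀ x : EuclideanSpace ℝ (Fin n), ∑ i, (inner ℝ (v' i) x : ℝ)^2 = ‖x‖^2 := by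
    intro x
    have := obas.sum_inner_mul_inner x x
    simp_rw [hobas] at this
    simp_rw [← real_inner_self_eq_norm_sq, ← this, sq]
    exact Finset.sum_congr rfl fun i _ => by rw [real_inner_comm]
  have hinner : ∀ (x y : EuclideanSpace ℝ (Fin n)),
      (inner ℝ x y : ℝ) = ∑ b, x b * y b := by
    intro x y
    simp [PiLp.inner_apply, RCLike.inner_apply, starRingEnd_apply, mul_comm]
  have hnormsq : ∀ x : EuclideanSpace ℝ (Fin n), ‖x‖^2 = ∑ b, (x b)^2 := by
    intro x
    rw [← real_inner_self_eq_norm_sq, PiLp.inner_apply]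
    exact Finset.sum_congr rfl fun b _ => by
      simp [RCLike.inner_apply, starRingEnd_apply, sq]
  -- expansion in the pi world
  have hexp' : ∀ x : Fin n → ℝ, x = ∑ i, (inner ℝ (v' i) (WithLp.toLp 2 x) : ℝ) • v i :=
    fun x => by
      have := congrArg WithLp.ofLp (hexp (WithLp.toLp 2 x))
      simpa only [WithLp.ofLp_sum, WithLp.ofLp_smul, WithLp.ofLp_toLp, v'] using this
  -- mulVec linearity over the expansion
  have hmv_sum : ∀ (M : Matrix (Fin n) (Fin n) ℝ) (c : Fin n → ℝ),
      M *ᵥ (∑ i, c i • v i) = ∑ i, c i • (M *ᵥ v i) := by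
    intro M c
    funext a
    simp only [Matrix.mulVec, dotProduct, Finset.sum_apply, Pi.smul_apply,
      smul_eq_mul, Finset.mul_sum]
    rw [Finset.sum_comm]
    exact Finset.sum_congr rfl fun i _ => Finset.sum_congr rfl fun b _ => by ring
  -- spectral decomposition of A
  have hdecomp : A = ∑ i, EV i • Matrix.vecMulVec (v i) (v i) := by
    set S := ∑ i, EV i • Matrix.vecMulVec (v i) (v i) with hS
    have hSv : ∀ j, S *ᵥ v j = EV j • v j := by
      intro j
      funext a
      simp only [hS, Matrix.mulVec, dotProduct, Finset.sum_apply, Matrix.sum_apply,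
        Matrix.smul_apply, Matrix.vecMulVec_apply, smul_eq_mul, Finset.sum_mul, Pi.smul_apply]
      rw [Finset.sum_comm]
      have h1 : ∀ i, ∑ b, EV i * (v i a * v i b) * v j b = (EV i * v i a) * (v i ⬝ᵥ v j) := by
        intro i; rw [dotProduct, Finset.mul_sum]
        exact Finset.sum_congr rfl fun b _ => by ring
      rw [Finset.sum_congr rfl fun i _ => h1 i]
      simp_rw [horth]
      simp [Finset.sum_ite_eq']
    have hx : ∀ x : Fin n → ℝ, A *ᵥ x = S *ᵥ x := by
      intro x
      conv_lhs => rw [hexp' x, hmv_sum]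
      conv_rhs => rw [hexp' x, hmv_sum]
      exact Finset.sum_congr rfl fun i _ => by rw [heig i, hSv i]
    ext a b
    have := congrFun (hx (Pi.single b 1)) a
    rwa [Matrix.mulVec_single_one, Matrix.mulVec_single_one] at this
  -- kernel of B
  let K : Submodule ℝ (EuclideanSpace ℝ (Fin n)) :=
    LinearMap.ker (B.mulVecLin ∘ₗ (WithLp.linearEquiv 2 ℝ (Fin n → ℝ)).toLinearMap)
  set m := Module.finrank ℝ K with hmdef
  have hm : B.rank + m = n := by
    have := LinearMap.finrank_range_add_finrank_ker
      (B.mulVecLin ∘ₗ (WithLp.linearEquiv 2 ℝ (Fin n → ℝ)).toLinearMap)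
    rw [LinearMap.range_comp_of_range_eq_top _ (LinearEquiv.range _)] at this
    simpa [Matrix.rank, hmdef, K] using this
  let ob := stdOrthonormalBasis ℝ K
  let u : Fin m → EuclideanSpace ℝ (Fin n) := fun j => (ob j : EuclideanSpace ℝ (Fin n))
  have hu : Orthonormal ℝ u := by
    rw [orthonormal_iff_ite]
    intro i j
    have hij := (ob.orthonormal).2 (i := i) (j := j)
    rcases eq_or_ne i j with h | h
    · subst h
      simp [u, ← Submodule.coe_inner, real_inner_self_eq_norm_sq, 
        (show ‖(ob i : EuclideanSpace ℝ (Fin n))‖ = 1 from ob.orthonormal.1 i)]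
    · simp [h, u, ← Submodule.coe_inner, hij h]
  have huk : ∀ j, B *ᵥ (u j) = 0 := by
    intro j
    have h2 : B.mulVecLin (WithLp.ofLp (u j)) = 0 := (ob j).2
    simpa [Matrix.mulVecLin_apply] using h2
  -- the coefficients
  set p : Fin n → ℝ := fun i => ∑ j, (inner ℝ (v' i) (u j) : ℝ)^2 with hp
  have hp0 : ∀ i, 0 ≤ p i := fun i => Finset.sum_nonneg fun j _ => sq_nonneg _
  have hp1 : ∀ i, p i ≤ 1 := by
    intro i
    have hb := hu.sum_inner_products_le (E := EuclideanSpace ℝ (Fin n)) (v' i)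
      (s := Finset.univ)
    have hnv : ‖v' i‖ = 1 := hv'.1 i
    calc p i = ∑ j, ‖(inner ℝ (u j) (v' i) : ℝ)‖^2 := by
          refine Finset.sum_congr rfl fun j _ => ?_
          rw [Real.norm_eq_abs, sq_abs, real_inner_comm]
      _ ≤ ‖v' i‖^2 := hb
      _ = 1 := by rw [hnv]; norm_num
  have hpsum : (n:ℝ) - k ≤ ∑ i, p i := by
    have h1 : ∑ i, p i = (m : ℝ) := by
      rw [hp, Finset.sum_comm]
      have : ∀ j, ∑ i, (inner ℝ (v' i) (u j) : ℝ)^2 = 1 := by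
        intro j
        rw [hpars (u j), hu.1 j]; norm_num
      rw [Finset.sum_congr rfl fun j _ => this j]
      simp
    rw [h1]
    have : n ≤ k + m := by omega
    have := (Nat.cast_le (α := ℝ)).2 this
    push_cast at this ⊢
    linarith
  -- main computation for RHS
  have hRHS : ∑ i, (EV i)^2 * p i ≤ ∑ a, ∑ b, ((A - B) a b)^2 := by
    let r : Fin n → EuclideanSpace ℝ (Fin n) := fun a => WithLp.toLp 2 (fun b => (A - B) a b : Fin n → ℝ)
    have hrow : ∀ a j, (inner ℝ (u j) (r a) : ℝ) = ((A - B) *ᵥ (u j)) a := by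
      intro a j
      rw [hinner]
      simp only [Matrix.mulVec, dotProduct, r, PiLp.toLp_apply]
      exact Finset.sum_congr rfl fun b _ => by ring
    have step1 : ∑ j, ∑ a, (((A - B) *ᵥ (u j)) a)^2 ≤ ∑ a, ∑ b, ((A - B) a b)^2 := by
      rw [Finset.sum_comm]
      apply Finset.sum_le_sum
      intro a _
      have hb := hu.sum_inner_products_le (E := EuclideanSpace ℝ (Fin n))
        (r a) (s := Finset.univ)
      have h2 : ∑ j, (((A - B) *ᵥ (u j)) a)^2
          = ∑ j, ‖(inner ℝ (u j) (r a) : ℝ)‖^2 := by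
        refine Finset.sum_congr rfl fun j _ => ?_
        rw [Real.norm_eq_abs, sq_abs, hrow]
      rw [h2]
      calc _ ≤ ‖r a‖^2 := hb
        _ = ∑ b, ((A - B) a b)^2 := by rw [hnormsq]
    have step2 : ∀ j, ∑ a, (((A - B) *ᵥ (u j)) a)^2
        = ∑ i, ((inner ℝ (v' i) (u j) : ℝ) * EV i)^2 := by
      intro j
      have hABu : (A - B) *ᵥ (u j) = A *ᵥ (u j) := by
        rw [Matrix.sub_mulVec, huk j, sub_zero]
      have hAu : A *ᵥ (u j) = ∑ i, ((inner ℝ (v' i) (u j) : ℝ) * EV i) • v i := by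
        conv_lhs => rw [show ((u j : Fin n → ℝ)) = ∑ i,
          (inner ℝ (v' i) (u j) : ℝ) • v i from hexp' (u j), hmv_sum]
        refine Finset.sum_congr rfl fun i _ => ?_
        rw [heig i, smul_smul]
      rw [hABu, hAu]
      have happ : ∀ a, (∑ i, ((inner ℝ (v' i) (u j) : ℝ) * EV i) • v i) a
          = ∑ i, ((inner ℝ (v' i) (u j) : ℝ) * EV i) * v i a := by
        intro a
        rw [Finset.sum_apply]
        exact Finset.sum_congr rfl fun i _ => rfl
      simp_rw [happ]
      exact key_sum v horth _
    calc ∑ i, (EV i)^2 * p i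
        = ∑ j, ∑ i, ((inner ℝ (v' i) (u j) : ℝ) * EV i)^2 := by
          rw [Finset.sum_comm]
          refine Finset.sum_congr rfl fun i _ => ?_
          rw [hp, Finset.mul_sum]
          exact Finset.sum_congr rfl fun j _ => by ring
      _ = ∑ j, ∑ a, (((A - B) *ᵥ (u j)) a)^2 := by
          exact Finset.sum_congr rfl fun j _ => (step2 j).symm
      _ ≤ ∑ a, ∑ b, ((A - B) a b)^2 := step1
  -- LHS computation
  set T := Finset.univ.filter (fun i : Fin n => ¬ (i : ℕ) < k) with hTdef
  have hAk : A - ∑ i ∈ Finset.univ.filter (fun i : Fin n => (i : ℕ) < k),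
      EV i • Matrix.vecMulVec (v i) (v i) = ∑ i ∈ T, EV i • Matrix.vecMulVec (v i) (v i) := by
    conv_lhs => rw [hdecomp]
    rw [← Finset.sum_filter_add_sum_filter_not Finset.univ (fun i : Fin n => (i : ℕ) < k)]
    abel
  have hLHS : ∑ a, ∑ b, ((∑ i ∈ T, EV i • Matrix.vecMulVec (v i) (v i)) a b)^2
      = ∑ i ∈ T, (EV i)^2 := by
    set c' : Fin n → ℝ := fun i => if i ∈ T then EV i else 0 with hc'
    have hentry : ∀ a b, (∑ i ∈ T, EV i • Matrix.vecMulVec (v i) (v i)) a b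
        = ∑ i, (c' i * v i a) * v i b := by
      intro a b
      rw [show (∑ i, (c' i * v i a) * v i b) = ∑ i, if i ∈ T then EV i * (v i a * v i b) else 0
        from Finset.sum_congr rfl fun i _ => by by_cases h : i ∈ T <;> simp [hc', h] <;> ring]
      rw [Finset.sum_ite_mem, Finset.univ_inter]
      simp [Matrix.sum_apply, Matrix.smul_apply, Matrix.vecMulVec_apply, smul_eq_mul, mul_assoc]
    calc ∑ a, ∑ b, ((∑ i ∈ T, EV i • Matrix.vecMulVec (v i) (v i)) a b)^2
        = ∑ a, ∑ i, (c' i * v i a)^2 := by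
          refine Finset.sum_congr rfl fun a _ => ?_
          have := key_sum v horth (fun i => c' i * v i a)
          simp_rw [hentry a]
          exact this
      _ = ∑ i, (c' i)^2 * (v i ⬝ᵥ v i) := by
          rw [Finset.sum_comm]
          refine Finset.sum_congr rfl fun i _ => ?_
          rw [dotProduct, Finset.mul_sum]
          exact Finset.sum_congr rfl fun a _ => by ring
      _ = ∑ i, (c' i)^2 := by
          refine Finset.sum_congr rfl fun i _ => ?_
          rw [horth i i]; simp
      _ = ∑ i ∈ T, (EV i)^2 := by
          rw [show (∑ i, (c' i)^2) = ∑ i, if i ∈ T then (EV i)^2 else 0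
            from Finset.sum_congr rfl fun i _ => by by_cases h : i ∈ T <;> simp [hc', h]]
          rw [Finset.sum_ite_mem, Finset.univ_inter]
  -- put it together
  apply frob_le'
  rw [hAk, hLHS]
  have hmaj := majorize (fun i => (EV i)^2) p
    (fun i j hij => by
      have := horder i j hij
      have h1 : |EV j|^2 ≤ |EV i|^2 := pow_le_pow_left₀ (abs_nonneg _) this 2
      simpa [sq_abs] using h1)
    (fun i => sq_nonneg _) hp0 hp1 hpsum
  calc ∑ i ∈ T, (EV i)^2 ≤ ∑ i, (EV i)^2 * p i := hmaj
    _ ≤ ∑ a, ∑ b, ((A - B) a b)^2 := hRHS
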